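/- If a bipartite state ρ can be transformed into σ by an LOSR map, then for every nonlocal game G the optimal expected payoff achievable with ρ is at least that achievable with σ: ℘*(ρ;G) ≥ ℘*(σ;G). -/

import Mathlib

open Matrix BigOperators
open scoped Kronecker ComplexOrder

noncomputable section

namespace QNL

/-- A density matrix: positive semidefinite with unit trace. -/
def IsDensity {n : Type*} [Fintype n] (ρ : Matrix n n ℂ) : Prop :=
  ρ.PosSemidef ∧ ρ.trace = 1

/-- A POVM with outcomes in `Fin k`: PSD elements summing to the identity. -/
def IsPOVM {n : Type*} [Fintype n] [DecidableEq n] {k : Type*} [Fintype k]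
    (P : k → Matrix n n ℂ) : Prop :=
  (∀ x, (P x).PosSemidef) ∧ ∑ x, P x = 1

/-- A probability distribution on `Fin k`. -/
def IsProbDist {k : ℕ} (ν : Fin k → ℝ) : Prop :=
  (∀ i, 0 ≤ ν i) ∧ ∑ i, ν i = 1

/-- A completely positive trace-preserving map, via a Kraus representation. -/
def IsCPTP {n m : ℕ}
    (Φ : Matrix (Fin n) (Fin n) ℂ → Matrix (Fin m) (Fin m) ℂ) : Prop :=
  ∃ (r : ℕ) (K : Fin r → Matrix (Fin m) (Fin n) ℂ),
    (∀ X, Φ X = ∑ i, K i * X * (K i)ᴴ) ∧ ∑ i, (K i)ᴴ * K i = 1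

/-- The tensor product `E ⊗ F` of two (linear) maps on matrix spaces, given
entrywise via matrix units. -/
def mapKron {a b a' b' : ℕ}
    (E : Matrix (Fin a) (Fin a) ℂ → Matrix (Fin a') (Fin a') ℂ)
    (F : Matrix (Fin b) (Fin b) ℂ → Matrix (Fin b') (Fin b') ℂ)
    (X : Matrix (Fin a × Fin b) (Fin a × Fin b) ℂ) :
    Matrix (Fin a' × Fin b') (Fin a' × Fin b') ℂ :=
  Matrix.of fun p q => ∑ i : Fin a, ∑ j : Fin a, ∑ k : Fin b, ∑ l : Fin b,
    X (i, k) (j, l) * E (Matrix.single i j 1) p.1 q.1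
      * F (Matrix.single k l 1) p.2 q.2

/-- Local operations and shared randomness: a convex mixture of products of
local CPTP maps. -/
def IsLOSR {a b a' b' : ℕ}
    (Φ : Matrix (Fin a × Fin b) (Fin a × Fin b) ℂ →
      Matrix (Fin a' × Fin b') (Fin a' × Fin b') ℂ) : Prop :=
  ∃ (k : ℕ) (ν : Fin k → ℝ)
    (E : Fin k → Matrix (Fin a) (Fin a) ℂ → Matrix (Fin a') (Fin a') ℂ)
    (F : Fin k → Matrix (Fin b) (Fin b) ℂ → Matrix (Fin b') (Fin b') ℂ),
    IsProbDist ν ∧ (∀ i, IsCPTP (E i)) ∧ (∀ i, IsCPTP (F i)) ∧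
    ∀ X, Φ X = ∑ i, (ν i : ℂ) • mapKron (E i) (F i) X

/-- A separable bipartite state: a finite convex combination of product
density matrices. -/
def IsSeparable {a b : ℕ}
    (σ : Matrix (Fin a × Fin b) (Fin a × Fin b) ℂ) : Prop :=
  ∃ (k : ℕ) (ν : Fin k → ℝ)
    (γ : Fin k → Matrix (Fin a) (Fin a) ℂ)
    (χ : Fin k → Matrix (Fin b) (Fin b) ℂ),
    IsProbDist ν ∧ (∀ i, IsDensity (γ i)) ∧ (∀ i, IsDensity (χ i)) ∧
    σ = ∑ i, (ν i : ℂ) • (γ i ⊗ₖ χ i)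

/-- A semi-quantum nonlocal game. -/
structure SQGame (nS nT nX nY a0 b0 : ℕ) where
  p : Fin nS → ℝ
  q : Fin nT → ℝ
  τ : Fin nS → Matrix (Fin a0) (Fin a0) ℂ
  ω : Fin nT → Matrix (Fin b0) (Fin b0) ℂ
  payoff : Fin nS → Fin nT → Fin nX → Fin nY → ℝ
  hp : IsProbDist p
  hq : IsProbDist q
  hτ : ∀ s, IsDensity (τ s)
  hω : ∀ t, IsDensity (ω t)

/-- The state `τ ⊗ ρ ⊗ ω` on `A₀ ⊗ (A ⊗ B) ⊗ B₀`, written entrywise. -/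
def questionState {a0 a b b0 : ℕ}
    (τ : Matrix (Fin a0) (Fin a0) ℂ)
    (ρ : Matrix (Fin a × Fin b) (Fin a × Fin b) ℂ)
    (ω : Matrix (Fin b0) (Fin b0) ℂ) :
    Matrix (Fin a0 × (Fin a × Fin b) × Fin b0)
      (Fin a0 × (Fin a × Fin b) × Fin b0) ℂ :=
  Matrix.of fun x y => τ x.1 y.1 * ρ x.2.1 y.2.1 * ω x.2.2 y.2.2

/-- The operator `P ⊗ Q` acting on `(A₀A) ⊗ (BB₀)`, arranged on
`A₀ ⊗ (A ⊗ B) ⊗ B₀`, written entrywise. -/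
def localOp {a0 a b b0 : ℕ}
    (P : Matrix (Fin a0 × Fin a) (Fin a0 × Fin a) ℂ)
    (Q : Matrix (Fin b × Fin b0) (Fin b × Fin b0) ℂ) :
    Matrix (Fin a0 × (Fin a × Fin b) × Fin b0)
      (Fin a0 × (Fin a × Fin b) × Fin b0) ℂ :=
  Matrix.of fun x y =>
    P (x.1, x.2.1.1) (y.1, y.2.1.1) * Q (x.2.1.2, x.2.2) (y.2.1.2, y.2.2)

/-- The expected payoff of a state `ρ` in the game `G` with local
measurement strategies `P`, `Q`. -/
def expPayoff {nS nT nX nY a0 b0 a b : ℕ} (G : SQGame nS nT nX nY a0 b0)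
    (ρ : Matrix (Fin a × Fin b) (Fin a × Fin b) ℂ)
    (P : Fin nX → Matrix (Fin a0 × Fin a) (Fin a0 × Fin a) ℂ)
    (Q : Fin nY → Matrix (Fin b × Fin b0) (Fin b × Fin b0) ℂ) : ℝ :=
  ∑ s, ∑ t, ∑ x, ∑ y, G.p s * G.q t * G.payoff s t x y *
    ((localOp (P x) (Q y) * questionState (G.τ s) ρ (G.ω t)).trace).re

/-- The optimal expected payoff `℘*(ρ; G)`. -/
def optPayoff {nS nT nX nY a0 b0 a b : ℕ}
    (G : SQGame nS nT nX nY a0 b0)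
    (ρ : Matrix (Fin a × Fin b) (Fin a × Fin b) ℂ) : ℝ :=
  sSup { r | ∃ (P : Fin nX → Matrix (Fin a0 × Fin a) (Fin a0 × Fin a) ℂ)
      (Q : Fin nY → Matrix (Fin b × Fin b0) (Fin b × Fin b0) ℂ),
      IsPOVM P ∧ IsPOVM Q ∧ r = expPayoff G ρ P Q }

/-- Membership in the convex hull of product POVMs `Co{M(A₀A;X) ⊗ M(BB₀;Y)}`. -/
def InCoHull {nX nY a0 b0 a b : ℕ}
    (Z : Fin nX → Fin nY →
      Matrix (Fin a0 × (Fin a × Fin b) × Fin b0)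
        (Fin a0 × (Fin a × Fin b) × Fin b0) ℂ) : Prop :=
  ∃ (k : ℕ) (ν : Fin k → ℝ)
    (P : Fin k → Fin nX → Matrix (Fin a0 × Fin a) (Fin a0 × Fin a) ℂ)
    (Q : Fin k → Fin nY → Matrix (Fin b × Fin b0) (Fin b × Fin b0) ℂ),
    IsProbDist ν ∧ (∀ i, IsPOVM (P i)) ∧ (∀ i, IsPOVM (Q i)) ∧
    ∀ x y, Z x y = ∑ i, (ν i : ℂ) • localOp (P i x) (Q i y)

/-- The set of question-answer probability distributions achievable with the
state `ρ` and (subnormalized) question ensembles `τ`, `ω`. -/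
def distSet {nS nT nX nY a0 b0 a b : ℕ}
    (ρ : Matrix (Fin a × Fin b) (Fin a × Fin b) ℂ)
    (τ : Fin nS → Matrix (Fin a0) (Fin a0) ℂ)
    (ω : Fin nT → Matrix (Fin b0) (Fin b0) ℂ) :
    Set (Fin nS × Fin nT × Fin nX × Fin nY → ℝ) :=
  { μ | ∃ Z, InCoHull Z ∧ ∀ s t x y,
      μ (s, t, x, y) = ((Z x y * questionState (τ s) ρ (ω t)).trace).re }

section AuxLemmas

lemma trace_mul_expand {n : Type*} [Fintype n] (M N : Matrix n n ℂ) :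
    (M * N).trace = ∑ u, ∑ v, M u v * N v u := by
  simp [Matrix.trace, Matrix.diag, Matrix.mul_apply]

lemma stdconj {n m : Type*} [Fintype n] [DecidableEq n] [Fintype m]
    (K : Matrix m n ℂ) (i j : n) (p q : m) :
    (K * Matrix.single i j (1:ℂ) * Kᴴ) p q = K p i * star (K q j) := by
  simp [Matrix.mul_apply, Matrix.single, Matrix.conjTranspose_apply,
    ite_and, ite_mul, mul_ite, zero_mul, mul_zero, Finset.sum_ite_eq, Finset.sum_ite_eq']

lemma conj_apply {n m : Type*} [Fintype n] [Fintype m]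
    (C : Matrix m n ℂ) (ρ : Matrix n n ℂ) (p q : m) :
    (C * ρ * Cᴴ) p q = ∑ v, ∑ w, C p v * ρ v w * star (C q w) := by
  simp only [Matrix.mul_apply, Matrix.conjTranspose_apply, Finset.sum_mul]
  rw [Finset.sum_comm]

lemma conjT_apply {n m : Type*} [Fintype n] [Fintype m]
    (D : Matrix m n ℂ) (P : Matrix m m ℂ) (r s : n) :
    (Dᴴ * P * D) r s = ∑ v, ∑ w, star (D v r) * P v w * D w s := by
  simp only [Matrix.mul_apply, Matrix.conjTranspose_apply, Finset.sum_mul]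
  rw [Finset.sum_comm]

end AuxLemmas

lemma sum_ite_pull {α M : Type*} [Fintype α] [AddCommMonoid M]
    (c : Prop) [Decidable c] (f : α → M) :
    (∑ x, if c then f x else 0) = if c then ∑ x, f x else 0 := by
  split <;> simp

set_option maxHeartbeats 2000000 in
lemma mapKron_kraus {a b a' b' rE rF : ℕ}
    (ρ : Matrix (Fin a × Fin b) (Fin a × Fin b) ℂ)
    (K : Fin rE → Matrix (Fin a') (Fin a) ℂ) (L : Fin rF → Matrix (Fin b') (Fin b) ℂ) :
    mapKron (fun X => ∑ m, K m * X * (K m)ᴴ) (fun X => ∑ n, L n * X * (L n)ᴴ) ρ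
      = ∑ m, ∑ n, (K m ⊗ₖ L n) * ρ * (K m ⊗ₖ L n)ᴴ := by
  ext ⟨p1, p2⟩ ⟨q1, q2⟩
  simp only [mapKron, Matrix.of_apply, Matrix.sum_apply, stdconj]
  simp only [conj_apply, Matrix.kroneckerMap_apply, Fintype.sum_prod_type, star_mul']
  simp only [Finset.mul_sum, Finset.sum_mul]
  simp only [← Finset.sum_product', Finset.univ_product_univ]
  refine Fintype.sum_equiv ⟨fun ⟨i,j,k,l,n,m⟩ => (m,n,i,k,j,l),
    fun ⟨m,n,i,k,j,l⟩ => (i,j,k,l,n,m), fun ⟨i,j,k,l,n,m⟩ => rfl,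
    fun ⟨m,n,i,k,j,l⟩ => rfl⟩ _ _ ?_
  rintro ⟨i,j,k,l,n,m⟩
  simp only [Equiv.coe_fn_mk]
  ring

lemma trace_localOp_qs {a0 b0 c d : ℕ}
    (P : Matrix (Fin a0 × Fin c) (Fin a0 × Fin c) ℂ)
    (Q : Matrix (Fin d × Fin b0) (Fin d × Fin b0) ℂ)
    (τ : Matrix (Fin a0) (Fin a0) ℂ) (ω : Matrix (Fin b0) (Fin b0) ℂ)
    (ρ : Matrix (Fin c × Fin d) (Fin c × Fin d) ℂ) :
    (localOp P Q * questionState τ ρ ω).trace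
      = ∑ u0, ∑ ua, ∑ ub, ∑ ub0, ∑ v0, ∑ va, ∑ vb, ∑ vb0,
          P (u0, ua) (v0, va) * Q (ub, ub0) (vb, vb0) *
            (τ v0 u0 * ρ (va, vb) (ua, ub) * ω vb0 ub0) := by
  rw [trace_mul_expand]
  simp only [localOp, questionState, Matrix.of_apply, Fintype.sum_prod_type]

lemma pullP_apply {a0 a a' rE : ℕ}
    (P : Matrix (Fin a0 × Fin a') (Fin a0 × Fin a') ℂ)
    (K : Fin rE → Matrix (Fin a') (Fin a) ℂ) (u0 v0 : Fin a0) (ua va : Fin a) :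
    (∑ m, ((1 : Matrix (Fin a0) (Fin a0) ℂ) ⊗ₖ K m)ᴴ * P *
        ((1 : Matrix (Fin a0) (Fin a0) ℂ) ⊗ₖ K m)) (u0, ua) (v0, va)
      = ∑ m, ∑ α, ∑ β, star (K m α ua) * P (u0, α) (v0, β) * K m β va := by
  simp only [Matrix.sum_apply, conjT_apply, Fintype.sum_prod_type_right,
    Matrix.kroneckerMap_apply, Matrix.one_apply, ite_mul, mul_ite, one_mul,
    zero_mul, mul_zero, mul_one, apply_ite (star : ℂ → ℂ), star_zero, star_one, sum_ite_pull,
    Finset.sum_ite_eq, Finset.sum_ite_eq', Finset.mem_univ, if_true]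

lemma pullQ_apply {b0 b b' rF : ℕ}
    (Q : Matrix (Fin b' × Fin b0) (Fin b' × Fin b0) ℂ)
    (L : Fin rF → Matrix (Fin b') (Fin b) ℂ) (ub0 vb0 : Fin b0) (ub vb : Fin b) :
    (∑ n, (L n ⊗ₖ (1 : Matrix (Fin b0) (Fin b0) ℂ))ᴴ * Q *
        (L n ⊗ₖ (1 : Matrix (Fin b0) (Fin b0) ℂ))) (ub, ub0) (vb, vb0)
      = ∑ n, ∑ γ, ∑ δ, star (L n γ ub) * Q (γ, ub0) (δ, vb0) * L n δ vb := by
  simp only [Matrix.sum_apply, conjT_apply, Fintype.sum_prod_type_right,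
    Matrix.kroneckerMap_apply, Matrix.one_apply, ite_mul, mul_ite, one_mul,
    zero_mul, mul_zero, mul_one, apply_ite (star : ℂ → ℂ), star_zero, star_one, sum_ite_pull,
    Finset.sum_ite_eq, Finset.sum_ite_eq', Finset.mem_univ, if_true]

set_option maxHeartbeats 6000000 in
lemma key_trace {a b a' b' a0 b0 rE rF : ℕ}
    (ρ : Matrix (Fin a × Fin b) (Fin a × Fin b) ℂ)
    (τ : Matrix (Fin a0) (Fin a0) ℂ) (ω : Matrix (Fin b0) (Fin b0) ℂ)
    (K : Fin rE → Matrix (Fin a') (Fin a) ℂ) (L : Fin rF → Matrix (Fin b') (Fin b) ℂ)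
    (P : Matrix (Fin a0 × Fin a') (Fin a0 × Fin a') ℂ)
    (Q : Matrix (Fin b' × Fin b0) (Fin b' × Fin b0) ℂ) :
    (localOp P Q * questionState τ (mapKron (fun X => ∑ m, K m * X * (K m)ᴴ)
        (fun X => ∑ n, L n * X * (L n)ᴴ) ρ) ω).trace
    = (localOp (∑ m, ((1 : Matrix (Fin a0) (Fin a0) ℂ) ⊗ₖ K m)ᴴ * P *
          ((1 : Matrix (Fin a0) (Fin a0) ℂ) ⊗ₖ K m))
        (∑ n, (L n ⊗ₖ (1 : Matrix (Fin b0) (Fin b0) ℂ))ᴴ * Q *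
          (L n ⊗ₖ (1 : Matrix (Fin b0) (Fin b0) ℂ))) * questionState τ ρ ω).trace := by
  rw [mapKron_kraus, trace_localOp_qs, trace_localOp_qs]
  simp only [pullP_apply, pullQ_apply]
  simp (config := { maxSteps := 4000000 }) only [Matrix.sum_apply, conj_apply,
    Matrix.kroneckerMap_apply, Fintype.sum_prod_type, star_mul']
  simp (config := { maxSteps := 4000000 }) only [Finset.mul_sum, Finset.sum_mul]
  simp (config := { maxSteps := 4000000 }) only [← Finset.sum_product', Finset.univ_product_univ]
  refine Fintype.sum_equiv
    ⟨fun ⟨u0,ua,ub,ub0,v0,va,vb,vb0,m,n,i,k,j,l⟩ =>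
        (u0, j, l, ub0, v0, i, k, vb0, n, ub, vb, m, ua, va),
      fun ⟨U0,UA,UB,UB0,V0,VA,VB,VB0,n,g,d,m,al,be⟩ =>
        (U0, al, g, UB0, V0, be, d, VB0, m, n, VA, VB, UA, UB),
      fun ⟨u0,ua,ub,ub0,v0,va,vb,vb0,m,n,i,k,j,l⟩ => rfl,
      fun ⟨U0,UA,UB,UB0,V0,VA,VB,VB0,n,g,d,m,al,be⟩ => rfl⟩ _ _ ?_
  rintro ⟨u0,ua,ub,ub0,v0,va,vb,vb0,m,n,i,k,j,l⟩
  simp only [Equiv.coe_fn_mk]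
  ring

lemma kron_conjT {m n m' n' : Type*} [Fintype m] [Fintype n] [Fintype m'] [Fintype n']
    (A : Matrix m n ℂ) (B : Matrix m' n' ℂ) : (A ⊗ₖ B)ᴴ = Aᴴ ⊗ₖ Bᴴ := by
  ext ⟨i, j⟩ ⟨k, l⟩
  simp [Matrix.conjTranspose_apply, star_mul']

lemma kron_sum_right {m n p : Type*} [Fintype m] [Fintype n] [Fintype p] {k : ℕ}
    (A : Matrix m n ℂ) (B : Fin k → Matrix p p ℂ) :
    ∑ i, A ⊗ₖ B i = A ⊗ₖ ∑ i, B i := by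
  ext ⟨x, y⟩ ⟨z, w⟩
  simp [Matrix.sum_apply, Finset.mul_sum]

lemma kron_sum_left {m n p : Type*} [Fintype m] [Fintype n] [Fintype p] {k : ℕ}
    (A : Matrix m n ℂ) (B : Fin k → Matrix p p ℂ) :
    ∑ i, B i ⊗ₖ A = (∑ i, B i) ⊗ₖ A := by
  ext ⟨x, y⟩ ⟨z, w⟩
  simp [Matrix.sum_apply, Finset.sum_mul]

lemma psd_sum {n : Type*} [Fintype n] {k : ℕ} {M : Fin k → Matrix n n ℂ}
    (h : ∀ i, (M i).PosSemidef) : (∑ i, M i).PosSemidef := by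
  classical
  refine Finset.sum_induction M _ (fun a b ha hb => ha.add hb) Matrix.PosSemidef.zero
    (fun i _ => h i)

lemma isPOVM_pullP {a0 a a' rE nX : ℕ}
    (P : Fin nX → Matrix (Fin a0 × Fin a') (Fin a0 × Fin a') ℂ) (hP : IsPOVM P)
    (K : Fin rE → Matrix (Fin a') (Fin a) ℂ) (hK : ∑ m, (K m)ᴴ * K m = 1) :
    IsPOVM (fun x => ∑ m, ((1 : Matrix (Fin a0) (Fin a0) ℂ) ⊗ₖ K m)ᴴ * P x *
      ((1 : Matrix (Fin a0) (Fin a0) ℂ) ⊗ₖ K m)) := by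
  constructor
  · exact fun x => psd_sum fun m => (hP.1 x).conjTranspose_mul_mul_same _
  · rw [Finset.sum_comm]
    have : ∀ m, ∑ x, ((1 : Matrix (Fin a0) (Fin a0) ℂ) ⊗ₖ K m)ᴴ * P x *
        ((1 : Matrix (Fin a0) (Fin a0) ℂ) ⊗ₖ K m)
        = (1 : Matrix (Fin a0) (Fin a0) ℂ) ⊗ₖ ((K m)ᴴ * K m) := by
      intro m
      rw [← Matrix.sum_mul, ← Matrix.mul_sum, hP.2, Matrix.mul_one, kron_conjT,
        Matrix.conjTranspose_one, ← Matrix.mul_kronecker_mul, Matrix.one_mul]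
    rw [Finset.sum_congr rfl fun m _ => this m, kron_sum_right, hK,
      Matrix.one_kronecker_one]

lemma isPOVM_pullQ {b0 b b' rF nY : ℕ}
    (Q : Fin nY → Matrix (Fin b' × Fin b0) (Fin b' × Fin b0) ℂ) (hQ : IsPOVM Q)
    (L : Fin rF → Matrix (Fin b') (Fin b) ℂ) (hL : ∑ n, (L n)ᴴ * L n = 1) :
    IsPOVM (fun y => ∑ n, (L n ⊗ₖ (1 : Matrix (Fin b0) (Fin b0) ℂ))ᴴ * Q y *
      (L n ⊗ₖ (1 : Matrix (Fin b0) (Fin b0) ℂ))) := by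
  constructor
  · exact fun y => psd_sum fun n => (hQ.1 y).conjTranspose_mul_mul_same _
  · rw [Finset.sum_comm]
    have : ∀ n, ∑ y, (L n ⊗ₖ (1 : Matrix (Fin b0) (Fin b0) ℂ))ᴴ * Q y *
        (L n ⊗ₖ (1 : Matrix (Fin b0) (Fin b0) ℂ))
        = ((L n)ᴴ * L n) ⊗ₖ (1 : Matrix (Fin b0) (Fin b0) ℂ) := by
      intro n
      rw [← Matrix.sum_mul, ← Matrix.mul_sum, hQ.2, Matrix.mul_one, kron_conjT,
        Matrix.conjTranspose_one, ← Matrix.mul_kronecker_mul, Matrix.one_mul]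
    rw [Finset.sum_congr rfl fun n _ => this n, kron_sum_left, hL,
      Matrix.one_kronecker_one]

lemma posSemidef_iff_eq_transpose_mul_self_mp {n : Type*} [Fintype n] [DecidableEq n]
    {A : Matrix n n ℂ} (hA : A.PosSemidef) : ∃ B : Matrix n n ℂ, A = Bᴴ * B := by
  open scoped MatrixOrder in
  exact CStarAlgebra.nonneg_iff_eq_star_mul_self.mp (Matrix.nonneg_iff_posSemidef.mpr hA)

lemma psd_kron {m n : Type*} [Fintype m] [DecidableEq m] [Fintype n] [DecidableEq n]
    {A : Matrix m m ℂ} {B : Matrix n n ℂ} (hA : A.PosSemidef) (hB : B.PosSemidef) :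
    (A ⊗ₖ B).PosSemidef := by
  obtain ⟨A1, rfl⟩ := posSemidef_iff_eq_transpose_mul_self_mp hA
  obtain ⟨B1, rfl⟩ := posSemidef_iff_eq_transpose_mul_self_mp hB
  rw [Matrix.mul_kronecker_mul, ← kron_conjT]
  exact Matrix.posSemidef_conjTranspose_mul_self _

lemma psd_trace_re_nonneg {n : Type*} [Fintype n] {M : Matrix n n ℂ}
    (h : M.PosSemidef) : 0 ≤ M.trace.re := by
  classical
  obtain ⟨B, rfl⟩ := posSemidef_iff_eq_transpose_mul_self_mp h
  rw [Matrix.trace]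
  simp only [Matrix.diag, Matrix.mul_apply, Matrix.conjTranspose_apply, Complex.re_sum]
  refine Finset.sum_nonneg fun i _ => Finset.sum_nonneg fun j _ => ?_
  simp [Complex.mul_re, mul_self_nonneg]
  nlinarith [mul_self_nonneg (B j i).re, mul_self_nonneg (B j i).im]

lemma psd_mul_trace_re_nonneg {n : Type*} [Fintype n] {M N : Matrix n n ℂ}
    (hM : M.PosSemidef) (hN : N.PosSemidef) : 0 ≤ ((M * N).trace).re := by
  classical
  obtain ⟨B, rfl⟩ := posSemidef_iff_eq_transpose_mul_self_mp hN
  rw [← Matrix.mul_assoc, Matrix.trace_mul_comm]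
  have : B * (M * Bᴴ) = B * M * Bᴴ := by rw [Matrix.mul_assoc]
  rw [this]
  exact psd_trace_re_nonneg (hM.mul_mul_conjTranspose_same B)

lemma localOp_eq_submatrix {a0 b0 c d : ℕ}
    (P : Matrix (Fin a0 × Fin c) (Fin a0 × Fin c) ℂ)
    (Q : Matrix (Fin d × Fin b0) (Fin d × Fin b0) ℂ) :
    localOp P Q = (P ⊗ₖ Q).submatrix
      (fun x : Fin a0 × (Fin c × Fin d) × Fin b0 => ((x.1, x.2.1.1), (x.2.1.2, x.2.2)))
      (fun x => ((x.1, x.2.1.1), (x.2.1.2, x.2.2))) := rfl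

lemma psd_localOp {a0 b0 c d : ℕ}
    {P : Matrix (Fin a0 × Fin c) (Fin a0 × Fin c) ℂ}
    {Q : Matrix (Fin d × Fin b0) (Fin d × Fin b0) ℂ}
    (hP : P.PosSemidef) (hQ : Q.PosSemidef) : (localOp P Q).PosSemidef := by
  rw [localOp_eq_submatrix]
  exact (psd_kron hP hQ).submatrix _

lemma qs_eq_kron {a0 b0 c d : ℕ}
    (τ : Matrix (Fin a0) (Fin a0) ℂ) (ω : Matrix (Fin b0) (Fin b0) ℂ)
    (ρ : Matrix (Fin c × Fin d) (Fin c × Fin d) ℂ) :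
    questionState τ ρ ω = τ ⊗ₖ (ρ ⊗ₖ ω) := by
  ext ⟨x0, xm, xb0⟩ ⟨y0, ym, yb0⟩
  simp [questionState, mul_assoc]

lemma psd_qs {a0 b0 c d : ℕ}
    {τ : Matrix (Fin a0) (Fin a0) ℂ} {ω : Matrix (Fin b0) (Fin b0) ℂ}
    {ρ : Matrix (Fin c × Fin d) (Fin c × Fin d) ℂ}
    (hτ : τ.PosSemidef) (hρ : ρ.PosSemidef) (hω : ω.PosSemidef) :
    (questionState τ ρ ω).PosSemidef := by
  rw [qs_eq_kron]; exact psd_kron hτ (psd_kron hρ hω)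

lemma qs_trace {a0 b0 c d : ℕ}
    (τ : Matrix (Fin a0) (Fin a0) ℂ) (ω : Matrix (Fin b0) (Fin b0) ℂ)
    (ρ : Matrix (Fin c × Fin d) (Fin c × Fin d) ℂ) :
    (questionState τ ρ ω).trace = τ.trace * (ρ.trace * ω.trace) := by
  rw [qs_eq_kron, Matrix.trace_kronecker, Matrix.trace_kronecker]

lemma localOp_sum {a0 b0 c d nX nY : ℕ}
    (P : Fin nX → Matrix (Fin a0 × Fin c) (Fin a0 × Fin c) ℂ)
    (Q : Fin nY → Matrix (Fin d × Fin b0) (Fin d × Fin b0) ℂ) :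
    localOp (∑ x, P x) (∑ y, Q y) = ∑ x, ∑ y, localOp (P x) (Q y) := by
  ext u v
  simp [localOp, Matrix.sum_apply, Finset.sum_mul, Finset.mul_sum]
  rw [Finset.sum_comm]

lemma localOp_one {a0 b0 c d : ℕ} :
    localOp (1 : Matrix (Fin a0 × Fin c) (Fin a0 × Fin c) ℂ)
      (1 : Matrix (Fin d × Fin b0) (Fin d × Fin b0) ℂ) = 1 := by
  ext ⟨u0, ⟨ua, ub⟩, ub0⟩ ⟨v0, ⟨va, vb⟩, vb0⟩
  simp [localOp, Matrix.one_apply, Prod.ext_iff, ite_and]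
  aesop

lemma sum_rot5 {α β γ δ ε M : Type*} [AddCommMonoid M] [Fintype α] [Fintype β]
    [Fintype γ] [Fintype δ] [Fintype ε] (f : α → β → γ → δ → ε → M) :
    ∑ a, ∑ b, ∑ c, ∑ d, ∑ e, f a b c d e
      = ∑ e, ∑ a, ∑ b, ∑ c, ∑ d, f a b c d e := by
  refine (Finset.sum_congr rfl fun a _ => (Finset.sum_congr rfl fun b _ =>
    (Finset.sum_congr rfl fun c _ => Finset.sum_comm))).trans ?_
  refine (Finset.sum_congr rfl fun a _ => (Finset.sum_congr rfl fun b _ =>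
    Finset.sum_comm)).trans ?_
  refine (Finset.sum_congr rfl fun a _ => Finset.sum_comm).trans ?_
  exact Finset.sum_comm

lemma qs_sum_smul {a0 b0 c d k : ℕ} (ν : Fin k → ℝ)
    (ρ : Fin k → Matrix (Fin c × Fin d) (Fin c × Fin d) ℂ)
    (τ : Matrix (Fin a0) (Fin a0) ℂ) (ω : Matrix (Fin b0) (Fin b0) ℂ) :
    questionState τ (∑ i, (ν i : ℂ) • ρ i) ω
      = ∑ i, (ν i : ℂ) • questionState τ (ρ i) ω := by
  ext x y
  simp only [questionState, Matrix.of_apply, Matrix.sum_apply, Matrix.smul_apply,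
    smul_eq_mul, Finset.mul_sum, Finset.sum_mul]
  exact Finset.sum_congr rfl fun i _ => by ring

lemma expPayoff_convex {nS nT nX nY a0 b0 c d k : ℕ} (G : SQGame nS nT nX nY a0 b0)
    (ν : Fin k → ℝ) (ρ : Fin k → Matrix (Fin c × Fin d) (Fin c × Fin d) ℂ)
    (P : Fin nX → Matrix (Fin a0 × Fin c) (Fin a0 × Fin c) ℂ)
    (Q : Fin nY → Matrix (Fin d × Fin b0) (Fin d × Fin b0) ℂ) :
    expPayoff G (∑ i, (ν i : ℂ) • ρ i) P Q = ∑ i, ν i * expPayoff G (ρ i) P Q := by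
  unfold expPayoff
  have h : ∀ s t x y, G.p s * G.q t * G.payoff s t x y *
      ((localOp (P x) (Q y) * questionState (G.τ s) (∑ i, (ν i : ℂ) • ρ i) (G.ω t)).trace).re
      = ∑ i, ν i * (G.p s * G.q t * G.payoff s t x y *
        ((localOp (P x) (Q y) * questionState (G.τ s) (ρ i) (G.ω t)).trace).re) := by
    intro s t x y
    rw [qs_sum_smul, Matrix.mul_sum, Matrix.trace_sum]
    simp only [Matrix.mul_smul, Matrix.trace_smul, smul_eq_mul, Complex.re_sum,
      Complex.mul_re, Complex.ofReal_re, Complex.ofReal_im, zero_mul, sub_zero,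
      Finset.mul_sum]
    exact Finset.sum_congr rfl fun i _ => by ring
  simp only [h, Finset.mul_sum]
  exact sum_rot5 _

def payoffBound {nS nT nX nY a0 b0 : ℕ} (G : SQGame nS nT nX nY a0 b0) : ℝ :=
  ∑ s, ∑ t, ∑ x, ∑ y, G.p s * G.q t * |G.payoff s t x y|

lemma expPayoff_le_bound {nS nT nX nY a0 b0 c d : ℕ} (G : SQGame nS nT nX nY a0 b0)
    (ρ : Matrix (Fin c × Fin d) (Fin c × Fin d) ℂ) (hρ : IsDensity ρ)
    (P : Fin nX → Matrix (Fin a0 × Fin c) (Fin a0 × Fin c) ℂ)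
    (Q : Fin nY → Matrix (Fin d × Fin b0) (Fin d × Fin b0) ℂ)
    (hP : IsPOVM P) (hQ : IsPOVM Q) :
    expPayoff G ρ P Q ≤ payoffBound G := by
  have hT0 : ∀ s t x y, 0 ≤ ((localOp (P x) (Q y) *
      questionState (G.τ s) ρ (G.ω t)).trace).re := fun s t x y =>
    psd_mul_trace_re_nonneg (psd_localOp (hP.1 x) (hQ.1 y))
      (psd_qs (G.hτ s).1 hρ.1 (G.hω t).1)
  have hsum : ∀ s t, ∑ x, ∑ y, ((localOp (P x) (Q y) *
      questionState (G.τ s) ρ (G.ω t)).trace).re = 1 := by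
    intro s t
    have : ∑ x, ∑ y, (localOp (P x) (Q y) * questionState (G.τ s) ρ (G.ω t)).trace
        = ((∑ x, ∑ y, localOp (P x) (Q y)) * questionState (G.τ s) ρ (G.ω t)).trace := by
      simp only [Matrix.sum_mul, Matrix.trace_sum]
    have h2 : (∑ x, ∑ y, localOp (P x) (Q y)) = 1 := by
      rw [← localOp_sum, hP.2, hQ.2, localOp_one]
    simp only [← Complex.re_sum, this, h2, Matrix.one_mul, qs_trace,
      (G.hτ s).2, (G.hω t).2, hρ.2]
    simp
  have hT1 : ∀ s t x y, ((localOp (P x) (Q y) *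
      questionState (G.τ s) ρ (G.ω t)).trace).re ≤ 1 := by
    intro s t x y
    rw [← hsum s t]
    calc ((localOp (P x) (Q y) * questionState (G.τ s) ρ (G.ω t)).trace).re
        ≤ ∑ y', ((localOp (P x) (Q y') * questionState (G.τ s) ρ (G.ω t)).trace).re :=
          Finset.single_le_sum (fun y' _ => hT0 s t x y') (Finset.mem_univ y)
      _ ≤ ∑ x', ∑ y', ((localOp (P x') (Q y') *
            questionState (G.τ s) ρ (G.ω t)).trace).re :=
          Finset.single_le_sum (fun x' _ => Finset.sum_nonneg fun y' _ => hT0 s t x' y')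
            (Finset.mem_univ x)
  unfold expPayoff payoffBound
  refine Finset.sum_le_sum fun s _ => Finset.sum_le_sum fun t _ =>
    Finset.sum_le_sum fun x _ => Finset.sum_le_sum fun y _ => ?_
  have hpq : 0 ≤ G.p s * G.q t := mul_nonneg (G.hp.1 s) (G.hq.1 t)
  calc G.p s * G.q t * G.payoff s t x y *
        ((localOp (P x) (Q y) * questionState (G.τ s) ρ (G.ω t)).trace).re
      = (G.p s * G.q t) * (G.payoff s t x y *
        ((localOp (P x) (Q y) * questionState (G.τ s) ρ (G.ω t)).trace).re) := by ring
    _ ≤ (G.p s * G.q t) * |G.payoff s t x y| := by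
        refine mul_le_mul_of_nonneg_left ?_ hpq
        calc G.payoff s t x y * ((localOp (P x) (Q y) *
              questionState (G.τ s) ρ (G.ω t)).trace).re
            ≤ |G.payoff s t x y| * ((localOp (P x) (Q y) *
              questionState (G.τ s) ρ (G.ω t)).trace).re :=
              mul_le_mul_of_nonneg_right (le_abs_self _) (hT0 s t x y)
          _ ≤ |G.payoff s t x y| * 1 :=
              mul_le_mul_of_nonneg_left (hT1 s t x y) (abs_nonneg _)
          _ = |G.payoff s t x y| := mul_one _
    _ = G.p s * G.q t * |G.payoff s t x y| := by ring

lemma isPOVM_trivial {n : Type*} [Fintype n] [DecidableEq n] {k : ℕ} (hk : 0 < k) :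
    IsPOVM (fun x : Fin k => if x = ⟨0, hk⟩ then (1 : Matrix n n ℂ) else 0) := by
  constructor
  · intro x
    simp only []
    split
    · exact Matrix.PosSemidef.one
    · exact Matrix.PosSemidef.zero
  · simp

lemma expPayoff_mapKron {nS nT nX nY a0 b0 a b a' b' rE rF : ℕ}
    (G : SQGame nS nT nX nY a0 b0)
    (ρ : Matrix (Fin a × Fin b) (Fin a × Fin b) ℂ)
    (K : Fin rE → Matrix (Fin a') (Fin a) ℂ) (L : Fin rF → Matrix (Fin b') (Fin b) ℂ)
    (P : Fin nX → Matrix (Fin a0 × Fin a') (Fin a0 × Fin a') ℂ)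
    (Q : Fin nY → Matrix (Fin b' × Fin b0) (Fin b' × Fin b0) ℂ) :
    expPayoff G (mapKron (fun X => ∑ m, K m * X * (K m)ᴴ)
        (fun X => ∑ n, L n * X * (L n)ᴴ) ρ) P Q
      = expPayoff G ρ
          (fun x => ∑ m, ((1 : Matrix (Fin a0) (Fin a0) ℂ) ⊗ₖ K m)ᴴ * P x *
            ((1 : Matrix (Fin a0) (Fin a0) ℂ) ⊗ₖ K m))
          (fun y => ∑ n, (L n ⊗ₖ (1 : Matrix (Fin b0) (Fin b0) ℂ))ᴴ * Q y *
            (L n ⊗ₖ (1 : Matrix (Fin b0) (Fin b0) ℂ))) := by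
  unfold expPayoff
  refine Finset.sum_congr rfl fun s _ => Finset.sum_congr rfl fun t _ =>
    Finset.sum_congr rfl fun x _ => Finset.sum_congr rfl fun y _ => ?_
  rw [key_trace]



/-- LOSR transformability implies payoff dominance in every
(semi-quantum) nonlocal game. -/
theorem losr_implies_payoff_dominance {a b a' b' : ℕ}
    (ρ : Matrix (Fin a × Fin b) (Fin a × Fin b) ℂ)
    (σ : Matrix (Fin a' × Fin b') (Fin a' × Fin b') ℂ)
    (hρ : IsDensity ρ)
    (Φ : Matrix (Fin a × Fin b) (Fin a × Fin b) ℂ →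
      Matrix (Fin a' × Fin b') (Fin a' × Fin b') ℂ)
    (hΦ : IsLOSR Φ) (hσ : Φ ρ = σ) :
    ∀ (nS nT nX nY a0 b0 : ℕ) (G : SQGame nS nT nX nY a0 b0),
      optPayoff G σ ≤ optPayoff G ρ := by
  intro nS nT nX nY a0 b0 G
  obtain ⟨k, ν, E, F, hν, hE, hF, hΦeq⟩ := hΦ
  unfold optPayoff
  -- degenerate cases
  by_cases hX : nX = 0
  · subst hX
    have hz : ∀ {c d : ℕ} (ρ' : Matrix (Fin c × Fin d) (Fin c × Fin d) ℂ)
        (P : Fin 0 → Matrix (Fin a0 × Fin c) (Fin a0 × Fin c) ℂ)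
        (Q : Fin nY → Matrix (Fin d × Fin b0) (Fin d × Fin b0) ℂ),
        expPayoff G ρ' P Q = 0 := by
      intro c d ρ' P Q
      simp [expPayoff]
    have h1 : sSup {r | ∃ P Q, IsPOVM P ∧ IsPOVM Q ∧ r = expPayoff G σ P Q} ≤ 0 := by
      refine Real.sSup_le ?_ le_rfl
      rintro r ⟨P, Q, hP, hQ, rfl⟩
      exact (hz σ P Q).le
    refine h1.trans ?_
    rcases Set.eq_empty_or_nonempty
        {r | ∃ P Q, IsPOVM P ∧ IsPOVM Q ∧ r = expPayoff G ρ P Q} with he | ⟨r, P, Q, hP, hQ, hr⟩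
    · rw [he, Real.sSup_empty]
    · have h0 : (0 : ℝ) ∈ {r | ∃ P Q, IsPOVM P ∧ IsPOVM Q ∧ r = expPayoff G ρ P Q} :=
        ⟨P, Q, hP, hQ, (hz ρ P Q).symm⟩
      refine le_csSup ⟨0, ?_⟩ h0
      rintro r' ⟨P', Q', hP', hQ', rfl⟩
      exact (hz ρ P' Q').le
  by_cases hY : nY = 0
  · subst hY
    have hz : ∀ {c d : ℕ} (ρ' : Matrix (Fin c × Fin d) (Fin c × Fin d) ℂ)
        (P : Fin nX → Matrix (Fin a0 × Fin c) (Fin a0 × Fin c) ℂ)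
        (Q : Fin 0 → Matrix (Fin d × Fin b0) (Fin d × Fin b0) ℂ),
        expPayoff G ρ' P Q = 0 := by
      intro c d ρ' P Q
      simp [expPayoff]
    have h1 : sSup {r | ∃ P Q, IsPOVM P ∧ IsPOVM Q ∧ r = expPayoff G σ P Q} ≤ 0 := by
      refine Real.sSup_le ?_ le_rfl
      rintro r ⟨P, Q, hP, hQ, rfl⟩
      exact (hz σ P Q).le
    refine h1.trans ?_
    rcases Set.eq_empty_or_nonempty
        {r | ∃ P Q, IsPOVM P ∧ IsPOVM Q ∧ r = expPayoff G ρ P Q} with he | ⟨r, P, Q, hP, hQ, hr⟩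
    · rw [he, Real.sSup_empty]
    · have h0 : (0 : ℝ) ∈ {r | ∃ P Q, IsPOVM P ∧ IsPOVM Q ∧ r = expPayoff G ρ P Q} :=
        ⟨P, Q, hP, hQ, (hz ρ P Q).symm⟩
      refine le_csSup ⟨0, ?_⟩ h0
      rintro r' ⟨P', Q', hP', hQ', rfl⟩
      exact (hz ρ P' Q').le
  -- main case
  have hX' : 0 < nX := Nat.pos_of_ne_zero hX
  have hY' : 0 < nY := Nat.pos_of_ne_zero hY
  have hbdd : BddAbove {r | ∃ P Q, IsPOVM P ∧ IsPOVM Q ∧ r = expPayoff G ρ P Q} := by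
    refine ⟨payoffBound G, ?_⟩
    rintro r ⟨P, Q, hP, hQ, rfl⟩
    exact expPayoff_le_bound G ρ hρ P Q hP hQ
  have hne : {r | ∃ P Q, IsPOVM P ∧ IsPOVM Q ∧ r = expPayoff G σ P Q}.Nonempty :=
    ⟨_, _, _, isPOVM_trivial hX', isPOVM_trivial hY', rfl⟩
  refine csSup_le hne ?_
  rintro r ⟨P, Q, hP, hQ, rfl⟩
  simp only [IsCPTP] at hE hF
  choose rE KE hKE hKE1 using hE
  choose rF LF hLF hLF1 using hF
  have hσ' : σ = ∑ i, (ν i : ℂ) • mapKron (E i) (F i) ρ := by rw [← hσ, hΦeq]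
  rw [hσ', expPayoff_convex]
  have hterm : ∀ i, expPayoff G (mapKron (E i) (F i) ρ) P Q
      ≤ sSup {r | ∃ P Q, IsPOVM P ∧ IsPOVM Q ∧ r = expPayoff G ρ P Q} := by
    intro i
    rw [show E i = fun X => ∑ m, KE i m * X * (KE i m)ᴴ from funext (hKE i),
      show F i = fun X => ∑ n, LF i n * X * (LF i n)ᴴ from funext (hLF i),
      expPayoff_mapKron]
    exact le_csSup hbdd ⟨_, _, isPOVM_pullP P hP (KE i) (hKE1 i),
      isPOVM_pullQ Q hQ (LF i) (hLF1 i), rfl⟩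
  calc ∑ i, ν i * expPayoff G (mapKron (E i) (F i) ρ) P Q
      ≤ ∑ i, ν i * sSup {r | ∃ P Q, IsPOVM P ∧ IsPOVM Q ∧ r = expPayoff G ρ P Q} :=
        Finset.sum_le_sum fun i _ => mul_le_mul_of_nonneg_left (hterm i) (hν.1 i)
    _ = sSup {r | ∃ P Q, IsPOVM P ∧ IsPOVM Q ∧ r = expPayoff G ρ P Q} := by
        rw [← Finset.sum_mul, hν.2, one_mul]

end QNL
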